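/- Let m ≥ 3 and a,b ≥ 1 with a+b ≤ m-1, and let D be the multigraph on vertices s, t, v consisting of a bundle of a parallel edges between s and t, a bundle of b parallel edges between t and v, and a bundle of m-a-b parallel edges between v and s, with terminals s and t. Then for all p ∈ [0,1], sRel(D,s,t;p) = (1-p)^a[(1-p)^b + (1-p)^{m-a-b} - 2(1-p)^{m-a}], and for all p ∈ (0,1), sRel(D,s,t;p) < (1-p) + (1-p)^{m-1} - 2(1-p)^m = sRel(G_{3,m},s,t;p). -/

import Mathlib

/-- A finite loopless multigraph: a finite vertex type `V`, a finite edge type `E`,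
and an endpoint map assigning to each edge an unordered pair of distinct vertices. -/
structure Multigraph where
  V : Type
  E : Type
  [fintV : Fintype V]
  [fintE : Fintype E]
  [decV : DecidableEq V]
  [decE : DecidableEq E]
  ends : E → Sym2 V
  loopless : ∀ e, ¬ (ends e).IsDiag

attribute [instance] Multigraph.fintV Multigraph.fintE Multigraph.decV Multigraph.decE

namespace Multigraph

/-- The simple graph on `G.V` underlying the spanning subgraph of `G` with edge set `E'`. -/
def subgraph (G : Multigraph) (E' : Finset G.E) : SimpleGraph G.V where
  Adj u v := u ≠ v ∧ ∃ e ∈ E', G.ends e = s(u, v)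
  symm := by
    constructor
    rintro u v ⟨huv, e, he, hends⟩
    exact ⟨huv.symm, e, he, hends.trans (Sym2.eq_swap)⟩
  loopless := by constructor; rintro u ⟨h, -⟩; exact h rfl

/-- The spanning subgraph of `G` with edge set `E'` has exactly two connected components,
one containing `s` and the other containing `t`. -/
def SplitState (G : Multigraph) (s t : G.V) (E' : Finset G.E) : Prop :=
  ¬ (G.subgraph E').Reachable s t ∧
    ∀ v : G.V, (G.subgraph E').Reachable v s ∨ (G.subgraph E').Reachable v t

open scoped Classical in
/-- The split reliability of `G` with terminals `s` and `t`, at edge probability `p`. -/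
noncomputable def sRel (G : Multigraph) (s t : G.V) (p : ℝ) : ℝ :=
  ∑ E' : Finset G.E, if G.SplitState s t E' then
    p ^ E'.card * (1 - p) ^ (Fintype.card G.E - E'.card) else 0

open scoped Classical in
/-- `N_i(G,s,t)`: the number of edge subsets of cardinality `i` whose spanning subgraph has
exactly two connected components, one containing `s` and the other containing `t`. -/
noncomputable def Nst (G : Multigraph) (s t : G.V) (i : ℕ) : ℕ :=
  (Finset.univ.filter fun E' : Finset G.E => E'.card = i ∧ G.SplitState s t E').card

/-- A multigraph is connected when its underlying simple graph is. -/
def Connected (G : Multigraph) : Prop := (G.subgraph Finset.univ).Connected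

open scoped Classical in
/-- The all-terminal reliability of `G` at edge probability `p`. -/
noncomputable def Rel (G : Multigraph) (p : ℝ) : ℝ :=
  ∑ E' : Finset G.E, if (G.subgraph E').Connected then
    p ^ E'.card * (1 - p) ^ (Fintype.card G.E - E'.card) else 0

/-- `G` together with terminals `s ≠ t` is an optimal `(n,m)`-graph for split reliability. -/
def IsOptimal (n m : ℕ) (G : Multigraph) (s t : G.V) : Prop :=
  G.Connected ∧ Fintype.card G.V = n ∧ Fintype.card G.E = m ∧ s ≠ t ∧
    ∀ (H : Multigraph) (s' t' : H.V), H.Connected → Fintype.card H.V = n →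
      Fintype.card H.E = m → s' ≠ t' → ∀ p : ℝ, 0 < p → p < 1 →
        H.sRel s' t' p ≤ G.sRel s t p

/-- An isomorphism of multigraphs taking terminals `s,t` of `G` to terminals `u,v` of `H`. -/
def IsoTerm (G H : Multigraph) (s t : G.V) (u v : H.V) : Prop :=
  ∃ (φ : G.V ≃ H.V) (ψ : G.E ≃ H.E),
    (∀ e, H.ends (ψ e) = (G.ends e).map φ) ∧ φ s = u ∧ φ t = v

end Multigraph

namespace Multigraph

/-- `Gnm n m k`: the multigraph obtained from a path `v_0, v_1, …, v_{n-1}` (terminals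
`s = v_0`, `t = v_{n-1}`) by replacing the path edge from `v_k` to `v_{k+1}` by a bundle of
`m - n + 2` parallel edges (so that the graph has `m` edges in total when `m ≥ n - 1`). -/
def Gnm (n m k : ℕ) (hk : k < n - 1) : Multigraph where
  V := Fin n
  E := Fin m
  ends e :=
    if h : e.val < n - 1 then
      s((⟨e.val, by omega⟩ : Fin n), (⟨e.val + 1, by omega⟩ : Fin n))
    else
      s((⟨k, by omega⟩ : Fin n), (⟨k + 1, by omega⟩ : Fin n))
  loopless e := by
    by_cases h : e.val < n - 1 <;>
      simp [h, Sym2.mk_isDiag_iff, Fin.ext_iff]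

/-- The cycle on `n ≥ 2` vertices. -/
def cycleGraph (n : ℕ) (hn : 2 ≤ n) : Multigraph where
  V := Fin n
  E := Fin n
  ends e := s(e, (⟨(e.val + 1) % n, Nat.mod_lt _ (by omega)⟩ : Fin n))
  loopless e := by
    simp only [Sym2.mk_isDiag_iff, Fin.ext_iff, Fin.val_mk]
    intro hc
    rcases Nat.lt_or_ge (e.val + 1) n with h' | h'
    · rw [Nat.mod_eq_of_lt h'] at hc; omega
    · have he : e.val + 1 = n := by have := e.isLt; omega
      rw [he, Nat.mod_self] at hc
      omega

/-- The multigraph obtained from `G` by adjoining a new vertex (`none`) joined by a single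
new edge to the vertex `u` of `G`. -/
def addPendant (G : Multigraph) (u : G.V) : Multigraph where
  V := Option G.V
  E := Option G.E
  ends e := e.elim s(some u, none) (fun e' => (G.ends e').map some)
  loopless e := by
    cases e with
    | none => simp [Sym2.mk_isDiag_iff]
    | some e' =>
        show ¬ ((G.ends e').map some).IsDiag
        rw [Sym2.isDiag_map (Option.some_injective _)]
        exact G.loopless e'

/-- The disjoint union of two multigraphs. -/
def disjSum (A B : Multigraph) : Multigraph where
  V := A.V ⊕ B.V
  E := A.E ⊕ B.E
  ends := Sum.elim (fun e => (A.ends e).map Sum.inl) (fun e => (B.ends e).map Sum.inr)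
  loopless e := by
    cases e with
    | inl e =>
        show ¬ ((A.ends e).map Sum.inl).IsDiag
        rw [Sym2.isDiag_map Sum.inl_injective]
        exact A.loopless e
    | inr e =>
        show ¬ ((B.ends e).map Sum.inr).IsDiag
        rw [Sym2.isDiag_map Sum.inr_injective]
        exact B.loopless e

/-- The multigraph on three vertices `0, 1, 2` with a bundle of `a` parallel edges between
`0` and `1` and a bundle of `b` parallel edges between `1` and `2`. -/
def doubleBundle (a b : ℕ) : Multigraph where
  V := Fin 3
  E := Fin (a + b)
  ends e := if e.val < a then s((0 : Fin 3), (1 : Fin 3)) else s((1 : Fin 3), (2 : Fin 3))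
  loopless e := by
    by_cases h : e.val < a <;> simp [h, Sym2.mk_isDiag_iff]

/-- The multigraph on three vertices `0, 1, 2` with bundles of `a`, `b`, `c` parallel edges
between `0,1`, between `1,2`, and between `2,0` respectively. -/
def tripleBundle (a b c : ℕ) : Multigraph where
  V := Fin 3
  E := Fin (a + b + c)
  ends e :=
    if e.val < a then s((0 : Fin 3), (1 : Fin 3))
    else if e.val < a + b then s((1 : Fin 3), (2 : Fin 3))
    else s((2 : Fin 3), (0 : Fin 3))
  loopless e := by
    by_cases h : e.val < a
    · simp [h, Sym2.mk_isDiag_iff]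
    · by_cases h' : e.val < a + b <;> simp [h, h', Sym2.mk_isDiag_iff]

/-- The multigraph obtained from a path `v_0, …, v_{n-1}` by replacing the path edge at
position `k₁` by a bundle of `2` parallel edges and the path edge at position `k₂` by a
bundle of `m - n + 1` parallel edges (for `m ≥ n`, `k₁ ≠ k₂`, the graph has `m` edges). -/
def Gnm2 (n m k₁ k₂ : ℕ) (hk₁ : k₁ < n - 1) (hk₂ : k₂ < n - 1) : Multigraph where
  V := Fin n
  E := Fin m
  ends e :=
    if h : e.val < n - 1 then
      s((⟨e.val, by omega⟩ : Fin n), (⟨e.val + 1, by omega⟩ : Fin n))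
    else if e.val = n - 1 then
      s((⟨k₁, by omega⟩ : Fin n), (⟨k₁ + 1, by omega⟩ : Fin n))
    else
      s((⟨k₂, by omega⟩ : Fin n), (⟨k₂ + 1, by omega⟩ : Fin n))
  loopless e := by
    by_cases h : e.val < n - 1
    · simp [h, Sym2.mk_isDiag_iff, Fin.ext_iff]
    · by_cases h' : e.val = n - 1 <;> simp [h, h', Sym2.mk_isDiag_iff, Fin.ext_iff]

/-- The simple graph on `n ≥ 4` vertices consisting of a path `s = v_0, …, v_{n-3} = t` of
length `n - 3` together with two further vertices `v_{n-2}, v_{n-1}` forming a triangle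
with `t`. It has `n` vertices and `n` edges. -/
def triGraph (n : ℕ) (hn : 4 ≤ n) : Multigraph where
  V := Fin n
  E := Fin n
  ends e :=
    if h : e.val < n - 3 then
      s((⟨e.val, by omega⟩ : Fin n), (⟨e.val + 1, by omega⟩ : Fin n))
    else if e.val = n - 3 then
      s((⟨n - 3, by omega⟩ : Fin n), (⟨n - 2, by omega⟩ : Fin n))
    else if e.val = n - 2 then
      s((⟨n - 2, by omega⟩ : Fin n), (⟨n - 1, by omega⟩ : Fin n))
    else
      s((⟨n - 1, by omega⟩ : Fin n), (⟨n - 3, by omega⟩ : Fin n))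
  loopless e := by
    by_cases h : e.val < n - 3
    · simp [h, Sym2.mk_isDiag_iff, Fin.ext_iff]
    · by_cases h' : e.val = n - 3
      · simp only [dif_neg h, if_pos h', Sym2.mk_isDiag_iff, Fin.mk.injEq]; omega
      · by_cases h'' : e.val = n - 2
        · simp only [dif_neg h, if_neg h', if_pos h'', Sym2.mk_isDiag_iff, Fin.mk.injEq]; omega
        · simp only [dif_neg h, if_neg h', if_neg h'', Sym2.mk_isDiag_iff, Fin.mk.injEq]; omega

end Multigraph

open Finset

section Aux
variable {ι : Type} [Fintype ι] [DecidableEq ι]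

set_option linter.unusedSectionVars false

lemma sum_powerset_weight (S : Finset ι) (p q : ℝ) :
    ∑ E' ∈ S.powerset, p ^ E'.card * q ^ (S.card - E'.card) = (p + q) ^ S.card := by
  have h := Finset.prod_add (fun _ : ι => p) (fun _ : ι => q) S
  simp only [prod_const] at h
  rw [h]
  refine Finset.sum_congr rfl fun t ht => ?_
  rw [card_sdiff_of_subset (mem_powerset.mp ht)]

lemma sum_family (S : Finset ι) (p q : ℝ) (hpq : p + q = 1) :
    ∑ E' : Finset ι, (if E' ⊆ S ∧ E'.Nonempty then
        p ^ E'.card * q ^ (Fintype.card ι - E'.card) else 0)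
      = q ^ (Fintype.card ι - S.card) - q ^ (Fintype.card ι) := by
  classical
  rw [← Finset.sum_filter]
  have hset : (univ.filter fun E' : Finset ι => E' ⊆ S ∧ E'.Nonempty)
      = S.powerset.erase ∅ := by
    ext E'; simp [Finset.nonempty_iff_ne_empty, and_comm]
  rw [hset, Finset.sum_erase_eq_sub (by simp)]
  have hstep : ∑ E' ∈ S.powerset, p ^ E'.card * q ^ (Fintype.card ι - E'.card)
      = q ^ (Fintype.card ι - S.card) * ∑ E' ∈ S.powerset, p ^ E'.card * q ^ (S.card - E'.card) := by
    rw [Finset.mul_sum]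
    refine Finset.sum_congr rfl fun t ht => ?_
    have h1 : t.card ≤ S.card := card_le_card (mem_powerset.mp ht)
    have h2 : S.card ≤ Fintype.card ι := S.card_le_univ
    have : Fintype.card ι - t.card = (Fintype.card ι - S.card) + (S.card - t.card) := by omega
    rw [this, pow_add]; ring
  rw [hstep, sum_powerset_weight, hpq, one_pow, mul_one]
  simp only [card_empty, pow_zero, one_mul, Nat.sub_zero]

lemma isolated_reachable {V : Type} {G : SimpleGraph V} {u v : V}
    (h : ∀ x, ¬ G.Adj u x) (hr : G.Reachable u v) : u = v := by
  obtain ⟨w⟩ := hr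
  cases w with
  | nil => rfl
  | cons h' _ => exact absurd h' (h _)

end Aux

/-- `iSet n l r`: edges of `Fin n` with value in `[l, r)`. -/
def iSet (n l r : ℕ) : Finset (Fin n) := univ.filter fun e => l ≤ e.val ∧ e.val < r

lemma mem_iSet {n l r : ℕ} {e : Fin n} : e ∈ iSet n l r ↔ l ≤ e.val ∧ e.val < r := by
  simp [iSet]

lemma iSet_card {n l r : ℕ} (h : r ≤ n) : (iSet n l r).card = r - l := by
  have himg : (iSet n l r).image Fin.val = Finset.Ico l r := by
    ext x
    simp only [mem_image, Finset.mem_Ico, mem_iSet]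
    constructor
    · rintro ⟨e, ⟨h1, h2⟩, rfl⟩; exact ⟨h1, h2⟩
    · rintro ⟨h1, h2⟩; exact ⟨⟨x, by omega⟩, ⟨h1, h2⟩, rfl⟩
  rw [← Nat.card_Ico l r, ← himg, card_image_of_injective _ Fin.val_injective]
namespace Multigraph

lemma subgraph_adj (G : Multigraph) (E' : Finset G.E) (u v : G.V) :
    (G.subgraph E').Adj u v ↔ u ≠ v ∧ ∃ e ∈ E', G.ends e = s(u, v) := Iff.rfl

lemma tripleBundle_ends_A {a b c : ℕ} (e : Fin (a+b+c)) (h2 : e.val < a) :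
    (tripleBundle a b c).ends e = s((0:Fin 3),(1:Fin 3)) := by
  simp only [tripleBundle, if_pos h2]

lemma tripleBundle_ends_B {a b c : ℕ} (e : Fin (a+b+c)) (h1 : a ≤ e.val) (h2 : e.val < a+b) :
    (tripleBundle a b c).ends e = s((1:Fin 3),(2:Fin 3)) := by
  simp only [tripleBundle, if_neg (by omega : ¬ e.val < a), if_pos h2]

lemma tripleBundle_ends_C {a b c : ℕ} (e : Fin (a+b+c)) (h1 : a+b ≤ e.val) :
    (tripleBundle a b c).ends e = s((2:Fin 3),(0:Fin 3)) := by
  simp only [tripleBundle, if_neg (by omega : ¬ e.val < a), if_neg (by omega : ¬ e.val < a+b)]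

lemma tripleBundle_split (a b c : ℕ) (E' : Finset (Fin (a+b+c))) :
    (tripleBundle a b c).SplitState (0:Fin 3) (1:Fin 3) E' ↔
      (E' ⊆ iSet (a+b+c) a (a+b) ∧ E'.Nonempty) ∨
      (E' ⊆ iSet (a+b+c) (a+b) (a+b+c) ∧ E'.Nonempty) := by
  constructor
  · rintro ⟨hnr, hall⟩
    have hne : E'.Nonempty := by
      rw [Finset.nonempty_iff_ne_empty]
      rintro rfl
      have hiso : ∀ x, ¬ ((tripleBundle a b c).subgraph ∅).Adj (2:Fin 3) x := by
        rintro x ⟨-, e, he, -⟩; exact absurd he (Finset.notMem_empty e)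
      rcases hall (2:Fin 3) with h | h
      · exact absurd (isolated_reachable hiso h) (by decide : ¬ (2:Fin 3) = 0)
      · exact absurd (isolated_reachable hiso h) (by decide : ¬ (2:Fin 3) = 1)
    have hA : ∀ e ∈ E', a ≤ e.val := by
      intro e he
      by_contra h
      have adj : ((tripleBundle a b c).subgraph E').Adj (0:Fin 3) (1:Fin 3) :=
        ⟨(by decide : (0:Fin 3) ≠ 1), e, he, tripleBundle_ends_A e (by omega)⟩
      exact hnr adj.reachable
    have hBC : ¬ ((∃ e ∈ E', e.val < a + b) ∧ (∃ e ∈ E', a + b ≤ e.val)) := by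
      rintro ⟨⟨e1, he1, h1⟩, e2, he2, h2⟩
      have adj12 : ((tripleBundle a b c).subgraph E').Adj (1:Fin 3) (2:Fin 3) :=
        ⟨(by decide : (1:Fin 3) ≠ 2), e1, he1, tripleBundle_ends_B e1 (hA e1 he1) h1⟩
      have adj20 : ((tripleBundle a b c).subgraph E').Adj (2:Fin 3) (0:Fin 3) :=
        ⟨(by decide : (2:Fin 3) ≠ 0), e2, he2, tripleBundle_ends_C e2 h2⟩
      exact hnr (adj20.symm.reachable.trans adj12.symm.reachable)
    by_cases h : ∃ e ∈ E', a + b ≤ e.val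
    · right
      refine ⟨fun e he => mem_iSet.mpr ⟨?_, e.isLt⟩, hne⟩
      by_contra h'
      exact hBC ⟨⟨e, he, by omega⟩, h⟩
    · left
      push_neg at h
      exact ⟨fun e he => mem_iSet.mpr ⟨hA e he, h e he⟩, hne⟩
  · rintro (⟨hsub, e0, he0⟩ | ⟨hsub, e0, he0⟩)
    · -- all edges between 1 and 2; 0 isolated
      have hiso : ∀ x, ¬ ((tripleBundle a b c).subgraph E').Adj (0:Fin 3) x := by
        rintro x ⟨-, e, he, hend⟩
        obtain ⟨h1, h2⟩ := mem_iSet.mp (hsub he)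
        rw [tripleBundle_ends_B e h1 h2] at hend
        replace hend := Sym2.eq_iff.mp hend
        rcases hend with ⟨h, -⟩ | ⟨-, h⟩
        · exact absurd h (by decide : ¬ (1:Fin 3) = 0)
        · exact absurd h (by decide : ¬ (2:Fin 3) = 0)
      obtain ⟨h1, h2⟩ := mem_iSet.mp (hsub he0)
      have adj12 : ((tripleBundle a b c).subgraph E').Adj (1:Fin 3) (2:Fin 3) :=
        ⟨(by decide : (1:Fin 3) ≠ 2), e0, he0, tripleBundle_ends_B e0 h1 h2⟩
      refine ⟨fun hr => absurd (isolated_reachable hiso hr)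
        (by decide : ¬ (0:Fin 3) = 1), fun v => ?_⟩
      fin_cases v
      · exact Or.inl (SimpleGraph.Reachable.refl _)
      · exact Or.inr (SimpleGraph.Reachable.refl _)
      · exact Or.inr adj12.symm.reachable
    · -- all edges between 2 and 0; 1 isolated
      have hiso : ∀ x, ¬ ((tripleBundle a b c).subgraph E').Adj (1:Fin 3) x := by
        rintro x ⟨-, e, he, hend⟩
        obtain ⟨h1, -⟩ := mem_iSet.mp (hsub he)
        rw [tripleBundle_ends_C e h1] at hend
        replace hend := Sym2.eq_iff.mp hend
        rcases hend with ⟨h, -⟩ | ⟨-, h⟩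
        · exact absurd h (by decide : ¬ (2:Fin 3) = 1)
        · exact absurd h (by decide : ¬ (0:Fin 3) = 1)
      obtain ⟨h1, -⟩ := mem_iSet.mp (hsub he0)
      have adj20 : ((tripleBundle a b c).subgraph E').Adj (2:Fin 3) (0:Fin 3) :=
        ⟨(by decide : (2:Fin 3) ≠ 0), e0, he0, tripleBundle_ends_C e0 h1⟩
      refine ⟨fun hr => absurd (isolated_reachable hiso hr.symm)
        (by decide : ¬ (1:Fin 3) = 0), fun v => ?_⟩
      fin_cases v
      · exact Or.inl (SimpleGraph.Reachable.refl _)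
      · exact Or.inr (SimpleGraph.Reachable.refl _)
      · exact Or.inl adj20.reachable
end Multigraph
namespace Multigraph

lemma Gnm3_ends_lt {m : ℕ} (hm : 3 ≤ m) (hk : 1 < 3 - 1) (e : Fin m) (h : e.val = 0) :
    (Gnm 3 m 1 hk).ends e = s((⟨0, by omega⟩ : Fin 3), (⟨1, by omega⟩ : Fin 3)) := by
  simp only [Gnm, dif_pos (show e.val < 3 - 1 by omega), Sym2.eq_iff, Fin.mk.injEq]
  exact Or.inl ⟨h, by omega⟩

lemma Gnm3_ends_ge {m : ℕ} (hm : 3 ≤ m) (hk : 1 < 3 - 1) (e : Fin m) (h : 1 ≤ e.val) :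
    (Gnm 3 m 1 hk).ends e = s((⟨1, by omega⟩ : Fin 3), (⟨2, by omega⟩ : Fin 3)) := by
  by_cases h2 : e.val < 3 - 1
  · have he1 : e.val = 1 := by omega
    simp only [Gnm, dif_pos h2, Sym2.eq_iff, Fin.mk.injEq]
    exact Or.inl ⟨he1, by omega⟩
  · simp only [Gnm, dif_neg h2]

lemma Gnm3_split (m : ℕ) (hm : 3 ≤ m) (hk : 1 < 3 - 1) (E' : Finset (Fin m)) :
    (Gnm 3 m 1 hk).SplitState (⟨0, by omega⟩ : Fin 3) (⟨2, by omega⟩ : Fin 3) E' ↔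
      (E' ⊆ iSet m 0 1 ∧ E'.Nonempty) ∨ (E' ⊆ iSet m 1 m ∧ E'.Nonempty) := by
  have l0 : (0:ℕ) < 3 := by omega
  have l1 : (1:ℕ) < 3 := by omega
  have l2 : (2:ℕ) < 3 := by omega
  have q01 : ¬((⟨0,l0⟩ : Fin 3) = ⟨1,l1⟩) := by simp [Fin.ext_iff]
  have q10 : ¬((⟨1,l1⟩ : Fin 3) = ⟨0,l0⟩) := by simp [Fin.ext_iff]
  have q12 : ¬((⟨1,l1⟩ : Fin 3) = ⟨2,l2⟩) := by simp [Fin.ext_iff]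
  have q21 : ¬((⟨2,l2⟩ : Fin 3) = ⟨1,l1⟩) := by simp [Fin.ext_iff]
  have q20 : ¬((⟨2,l2⟩ : Fin 3) = ⟨0,l0⟩) := by simp [Fin.ext_iff]
  have q02 : ¬((⟨0,l0⟩ : Fin 3) = ⟨2,l2⟩) := by simp [Fin.ext_iff]
  constructor
  · rintro ⟨hnr, hall⟩
    have hne : E'.Nonempty := by
      rw [Finset.nonempty_iff_ne_empty]
      rintro rfl
      have hiso : ∀ x, ¬ ((Gnm 3 m 1 hk).subgraph ∅).Adj (⟨1, l1⟩ : Fin 3) x := by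
        rintro x ⟨-, e, he, -⟩; exact absurd he (Finset.notMem_empty e)
      rcases hall (⟨1, l1⟩ : Fin 3) with h | h
      · exact absurd (isolated_reachable hiso h) q10
      · exact absurd (isolated_reachable hiso h) q12
    have hBC : ¬ ((∃ e ∈ E', e.val = 0) ∧ (∃ e ∈ E', 1 ≤ e.val)) := by
      rintro ⟨⟨e1, he1, h1⟩, e2, he2, h2⟩
      have adj01 : ((Gnm 3 m 1 hk).subgraph E').Adj (⟨0, l0⟩ : Fin 3) (⟨1, l1⟩ : Fin 3) :=
        ⟨q01, e1, he1, Gnm3_ends_lt hm hk e1 h1⟩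
      have adj12 : ((Gnm 3 m 1 hk).subgraph E').Adj (⟨1, l1⟩ : Fin 3) (⟨2, l2⟩ : Fin 3) :=
        ⟨q12, e2, he2, Gnm3_ends_ge hm hk e2 h2⟩
      exact hnr (adj01.reachable.trans adj12.reachable)
    by_cases h : ∃ e ∈ E', 1 ≤ e.val
    · right
      refine ⟨fun e he => mem_iSet.mpr ⟨?_, e.isLt⟩, hne⟩
      by_contra h'
      exact hBC ⟨⟨e, he, by omega⟩, h⟩
    · left
      push_neg at h
      exact ⟨fun e he => mem_iSet.mpr ⟨Nat.zero_le _, by have := h e he; omega⟩, hne⟩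
  · rintro (⟨hsub, e0, he0⟩ | ⟨hsub, e0, he0⟩)
    · -- only the edge 0–1; vertex 2 isolated
      have hiso : ∀ x, ¬ ((Gnm 3 m 1 hk).subgraph E').Adj (⟨2, l2⟩ : Fin 3) x := by
        rintro x ⟨-, e, he, hend⟩
        obtain ⟨-, h2⟩ := mem_iSet.mp (hsub he)
        rw [Gnm3_ends_lt hm hk e (by omega)] at hend
        replace hend := Sym2.eq_iff.mp hend
        rcases hend with ⟨h, -⟩ | ⟨-, h⟩
        · exact absurd h.symm q20
        · exact absurd h.symm q21
      obtain ⟨-, h2⟩ := mem_iSet.mp (hsub he0)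
      have adj01 : ((Gnm 3 m 1 hk).subgraph E').Adj (⟨0, l0⟩ : Fin 3) (⟨1, l1⟩ : Fin 3) :=
        ⟨q01, e0, he0, Gnm3_ends_lt hm hk e0 (by omega)⟩
      refine ⟨fun hr => absurd (isolated_reachable hiso hr.symm) q20, fun v => ?_⟩
      fin_cases v
      · exact Or.inl (SimpleGraph.Reachable.refl _)
      · exact Or.inl adj01.symm.reachable
      · exact Or.inr (SimpleGraph.Reachable.refl _)
    · -- all edges 1–2; vertex 0 isolated
      have hiso : ∀ x, ¬ ((Gnm 3 m 1 hk).subgraph E').Adj (⟨0, l0⟩ : Fin 3) x := by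
        rintro x ⟨-, e, he, hend⟩
        obtain ⟨h1, -⟩ := mem_iSet.mp (hsub he)
        rw [Gnm3_ends_ge hm hk e h1] at hend
        replace hend := Sym2.eq_iff.mp hend
        rcases hend with ⟨h, -⟩ | ⟨-, h⟩
        · exact absurd h q10
        · exact absurd h q20
      obtain ⟨h1, -⟩ := mem_iSet.mp (hsub he0)
      have adj12 : ((Gnm 3 m 1 hk).subgraph E').Adj (⟨1, l1⟩ : Fin 3) (⟨2, l2⟩ : Fin 3) :=
        ⟨q12, e0, he0, Gnm3_ends_ge hm hk e0 h1⟩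
      refine ⟨fun hr => absurd (isolated_reachable hiso hr) q02, fun v => ?_⟩
      fin_cases v
      · exact Or.inl (SimpleGraph.Reachable.refl _)
      · exact Or.inr adj12.reachable
      · exact Or.inr (SimpleGraph.Reachable.refl _)

end Multigraph
namespace Multigraph

lemma ite_or_add {P Q : Prop} [Decidable P] [Decidable Q] (h : ¬(P ∧ Q)) (w : ℝ) :
    (if P ∨ Q then w else 0) = (if P then w else 0) + (if Q then w else 0) := by
  by_cases hp : P <;> by_cases hq : Q <;> simp [hp, hq]
  exact absurd ⟨hp, hq⟩ h

lemma tripleBundle_sRel (a b c : ℕ) (p : ℝ) :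
    (tripleBundle a b c).sRel (0 : Fin 3) (1 : Fin 3) p =
      ((1 - p) ^ (a + c) - (1 - p) ^ (a + b + c)) +
      ((1 - p) ^ (a + b) - (1 - p) ^ (a + b + c)) := by
  classical
  have hcard : Fintype.card (tripleBundle a b c).E = a + b + c := Fintype.card_fin _
  have hstep : (tripleBundle a b c).sRel (0 : Fin 3) (1 : Fin 3) p
      = ∑ E' : Finset (tripleBundle a b c).E,
        ((if E' ⊆ iSet (a+b+c) a (a+b) ∧ E'.Nonempty then
            p ^ E'.card * (1-p) ^ (Fintype.card (tripleBundle a b c).E - E'.card) else 0)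
        + (if E' ⊆ iSet (a+b+c) (a+b) (a+b+c) ∧ E'.Nonempty then
            p ^ E'.card * (1-p) ^ (Fintype.card (tripleBundle a b c).E - E'.card) else 0)) := by
    delta sRel
    refine Finset.sum_congr rfl fun E' _ => ?_
    rw [if_congr (tripleBundle_split a b c E') rfl rfl]
    refine Eq.trans ?_ (ite_or_add (P := E' ⊆ iSet (a+b+c) a (a+b) ∧ E'.Nonempty)
      (Q := E' ⊆ iSet (a+b+c) (a+b) (a+b+c) ∧ E'.Nonempty) ?_ _)
    · congr!
    rintro ⟨⟨hs1, e, he⟩, hs2, -⟩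
    have m1 := mem_iSet.mp (hs1 he)
    have m2 := mem_iSet.mp (hs2 he)
    omega
  rw [hstep, Finset.sum_add_distrib]
  refine Eq.trans ?_ ((congrArg₂ (· + ·)
    (sum_family (ι := (tripleBundle a b c).E) (iSet (a+b+c) a (a+b)) p (1-p) (by ring))
    (sum_family (ι := (tripleBundle a b c).E) (iSet (a+b+c) (a+b) (a+b+c)) p (1-p) (by ring))).trans ?_)
  · congr!
  erw [hcard,
    iSet_card (by omega : a + b ≤ a + b + c), iSet_card (le_refl (a+b+c)),
    show a + b - a = b by omega, show a + b + c - (a + b) = c by omega,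
    show a + b + c - b = a + c by omega, show a + b + c - c = a + b by omega]

lemma Gnm3_sRel (m : ℕ) (hm : 3 ≤ m) (hk : 1 < 3 - 1) (p : ℝ) :
    (Gnm 3 m 1 hk).sRel (⟨0, by omega⟩ : Fin 3) (⟨2, by omega⟩ : Fin 3) p =
      ((1 - p) ^ (m - 1) - (1 - p) ^ m) + ((1 - p) - (1 - p) ^ m) := by
  classical
  have hcard : Fintype.card (Gnm 3 m 1 hk).E = m := Fintype.card_fin _
  have hstep : (Gnm 3 m 1 hk).sRel (⟨0, by omega⟩ : Fin 3) (⟨2, by omega⟩ : Fin 3) p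
      = ∑ E' : Finset (Gnm 3 m 1 hk).E,
        ((if E' ⊆ iSet m 0 1 ∧ E'.Nonempty then
            p ^ E'.card * (1-p) ^ (Fintype.card (Gnm 3 m 1 hk).E - E'.card) else 0)
        + (if E' ⊆ iSet m 1 m ∧ E'.Nonempty then
            p ^ E'.card * (1-p) ^ (Fintype.card (Gnm 3 m 1 hk).E - E'.card) else 0)) := by
    delta sRel
    refine Finset.sum_congr rfl fun E' _ => ?_
    rw [if_congr (Gnm3_split m hm hk E') rfl rfl]
    refine Eq.trans ?_ (ite_or_add (P := E' ⊆ iSet m 0 1 ∧ E'.Nonempty)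
      (Q := E' ⊆ iSet m 1 m ∧ E'.Nonempty) ?_ _)
    · congr!
    rintro ⟨⟨hs1, e, he⟩, hs2, -⟩
    have m1 := mem_iSet.mp (hs1 he)
    have m2 := mem_iSet.mp (hs2 he)
    omega
  rw [hstep, Finset.sum_add_distrib]
  refine Eq.trans ?_ ((congrArg₂ (· + ·)
    (sum_family (ι := (Gnm 3 m 1 hk).E) (iSet m 0 1) p (1-p) (by ring))
    (sum_family (ι := (Gnm 3 m 1 hk).E) (iSet m 1 m) p (1-p) (by ring))).trans ?_)
  · congr!
  erw [hcard,
    iSet_card (by omega : 1 ≤ m), iSet_card (le_refl m),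
    show (1:ℕ) - 0 = 1 by omega, show m - (m - 1) = 1 by omega, pow_one]

end Multigraph

lemma key_ineq (q : ℝ) (h0 : 0 < q) (h1 : q < 1) (a' b' c' : ℕ) :
    q ^ (a' + b' + 2) + q ^ (a' + c' + 2) < q + q ^ (a' + b' + c' + 2) := by
  have hq1 : q ≤ 1 := le_of_lt h1
  have hq0 : (0:ℝ) ≤ q := le_of_lt h0
  have E1 : q ^ (a' + c' + 2) * q ^ b' = q ^ (a' + b' + c' + 2) := by
    rw [← pow_add]; congr 1; omega
  have E2 : q * q ^ (a' + b' + 1) = q ^ (a' + b' + 2) := by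
    ring
  have A : q ^ (a' + c' + 2) * (1 - q ^ b') ≤ q ^ (a' + c' + 2) * (1 - q ^ (a' + b' + 1)) := by
    have : q ^ (a' + b' + 1) ≤ q ^ b' := pow_le_pow_of_le_one hq0 hq1 (by omega)
    have hp : (0:ℝ) ≤ q ^ (a' + c' + 2) := pow_nonneg hq0 _
    nlinarith
  have B : q ^ (a' + c' + 2) < q := by
    have h2 : q ^ (a' + c' + 2) ≤ q ^ 2 := pow_le_pow_of_le_one hq0 hq1 (by omega)
    nlinarith [sq_nonneg q]
  have C : 0 < 1 - q ^ (a' + b' + 1) := by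
    have : q ^ (a' + b' + 1) ≤ q ^ 1 := pow_le_pow_of_le_one hq0 hq1 (by omega)
    rw [pow_one] at this; linarith
  have D : q ^ (a' + c' + 2) * (1 - q ^ (a' + b' + 1)) < q * (1 - q ^ (a' + b' + 1)) :=
    mul_lt_mul_of_pos_right B C
  rw [mul_sub, mul_sub, mul_one, E1] at A
  rw [mul_sub, mul_sub, mul_one, E2] at D
  linarith

/-- For the triangle graph `D` on vertices `s, t, v` with bundles of `a`
edges between `s,t`, `b` edges between `t,v`, and `m-a-b` edges between `v,s` (terminals
`s, t`): `sRel(D,s,t;p) = (1-p)^a[(1-p)^b + (1-p)^{m-a-b} - 2(1-p)^{m-a}]` for `p ∈ [0,1]`,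
and for `p ∈ (0,1)` this is strictly less than
`(1-p) + (1-p)^{m-1} - 2(1-p)^m = sRel(G_{3,m},s,t;p)`. -/
theorem sRel_D_lt (m : ℕ) (hm : 3 ≤ m) (a b : ℕ) (ha : 1 ≤ a) (hb : 1 ≤ b)
    (hab : a + b ≤ m - 1) :
    (∀ p : ℝ, 0 ≤ p → p ≤ 1 →
      (Multigraph.tripleBundle a b (m - a - b)).sRel (0 : Fin 3) (1 : Fin 3) p =
        (1 - p) ^ a *
          ((1 - p) ^ b + (1 - p) ^ (m - a - b) - 2 * (1 - p) ^ (m - a))) ∧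
    (∀ p : ℝ, 0 < p → p < 1 →
      (Multigraph.tripleBundle a b (m - a - b)).sRel (0 : Fin 3) (1 : Fin 3) p <
        (1 - p) + (1 - p) ^ (m - 1) - 2 * (1 - p) ^ m ∧
      (1 - p) + (1 - p) ^ (m - 1) - 2 * (1 - p) ^ m =
        (Multigraph.Gnm 3 m 1 (by omega)).sRel
          (⟨0, by omega⟩ : Fin 3) (⟨2, by omega⟩ : Fin 3) p) := by
  obtain ⟨c, hm', hc1⟩ : ∃ c, m = a + b + c ∧ 1 ≤ c := ⟨m - a - b, by omega, by omega⟩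
  subst hm'
  have h1 : a + b + c - a - b = c := by omega
  have h2 : a + b + c - a = b + c := by omega
  rw [h1, h2]
  constructor
  · intro p _ _
    rw [Multigraph.tripleBundle_sRel]
    simp only [pow_add]
    ring
  · intro p hp0 hp1
    refine ⟨?_, ?_⟩
    · rw [Multigraph.tripleBundle_sRel]
      obtain ⟨a', rfl⟩ : ∃ a', a = a' + 1 := ⟨a - 1, by omega⟩
      obtain ⟨b', rfl⟩ : ∃ b', b = b' + 1 := ⟨b - 1, by omega⟩
      obtain ⟨c', rfl⟩ : ∃ c', c = c' + 1 := ⟨c - 1, by omega⟩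
      have key := key_ineq (1 - p) (by linarith) (by linarith) a' b' c'
      rw [show a' + 1 + (b' + 1) + (c' + 1) = a' + b' + c' + 3 by omega,
          show a' + b' + c' + 3 - 1 = a' + b' + c' + 2 by omega,
          show a' + 1 + (c' + 1) = a' + c' + 2 by omega,
          show a' + 1 + (b' + 1) = a' + b' + 2 by omega]
      linarith [key]
    · rw [Multigraph.Gnm3_sRel (a + b + c) (by omega) (by omega) p]
      ring
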